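/- Fix σ > 0 and let (W, U) be a correlated Brownian motion pair with dynamic correlation r, and let ρ_t denote the correlation of R_t = e^{σW_t} and S_t = e^{σU_t}. For the estimator γ̂_t of Eq. (3) and the corresponding variance estimators σ̂²_{t,W} and σ̂²_{t,U}, if b > 2 and a > 0 (and c is any real), then for each fixed integer t ≥ 1 the ratio 𝔼(γ̂_t) / √( 𝔼(σ̂²_{t,W}) · 𝔼(σ̂²_{t,U}) ) converges to ρ_t as T → ∞. -/

import Mathlib

open MeasureTheory ProbabilityTheory Filter Finset

/-- A standard Brownian motion sampled at the integer times. -/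
structure IsDiscreteBM {Ω : Type*} [MeasureSpace Ω] (X : ℕ → Ω → ℝ) : Prop where
  meas : ∀ t, Measurable (X t)
  init : ∀ᵐ ω ∂(ℙ : Measure Ω), X 0 ω = 0
  incr : ∀ s t : ℕ, s ≤ t →
    Measure.map (fun ω => X t ω - X s ω) (ℙ : Measure Ω) = gaussianReal 0 ((t - s : ℕ) : NNReal)
  indep_incr : ∀ u : ℕ → ℕ, Monotone u →
    iIndepFun
      (fun i ω => X (u (i + 1)) ω - X (u i) ω) (ℙ : Measure Ω)

/-- Independence of two processes (as functions into `ℕ → ℝ`). -/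
def ProcIndep {Ω : Type*} [MeasureSpace Ω] (A B : ℕ → Ω → ℝ) : Prop :=
  IndepFun (fun ω t => A t ω) (fun ω t => B t ω) (ℙ : Measure Ω)

/-- A correlated Brownian motion pair with dynamic correlation `ρ`. -/
structure IsCorrBMPair {Ω : Type*} [MeasureSpace Ω] (ρ : ℕ → ℝ) (X Y : ℕ → Ω → ℝ) : Prop where
  bound : ∀ t, |ρ t| ≤ 1
  bmX : IsDiscreteBM X
  bmY : IsDiscreteBM Y
  rep : ∃ X1 Y1 : ℕ → Ω → ℝ, IsDiscreteBM X1 ∧ IsDiscreteBM Y1 ∧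
    ProcIndep X1 Y ∧ ProcIndep Y1 X ∧
    (∀ t, ∀ᵐ ω ∂(ℙ : Measure Ω),
      X t ω = ρ t * Y t ω + Real.sqrt (1 - ρ t ^ 2) * X1 t ω) ∧
    (∀ t, ∀ᵐ ω ∂(ℙ : Measure Ω),
      Y t ω = ρ t * X t ω + Real.sqrt (1 - ρ t ^ 2) * Y1 t ω)

/-- The Eq. (3) covariance estimator `γ̂_t` for a Geometric Brownian motion pair
`(e^{σW}, e^{σU})`; with `U := W` it is the variance estimator `σ̂²_{t,W}`. -/
noncomputable def gbmGammaEq3 {Ω : Type*} [MeasureSpace Ω] (σ a b c : ℝ) (W U : ℕ → Ω → ℝ)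
    (T t : ℕ) (ω : Ω) : ℝ :=
  Real.exp (-(c * σ ^ 2 * T)) * ∑ k ∈ Finset.Icc 1 T,
    (Real.exp (a * σ ^ 2 * k) *
        ((Real.exp (σ * W t ω) - Real.exp (σ ^ 2 * t / 2))
          * (Real.exp (σ * U t ω) - Real.exp (σ ^ 2 * t / 2)))
      - Real.exp (-(b * σ ^ 2 * k)) *
        ((Real.exp (σ * W k ω) - Real.exp (σ ^ 2 * k / 2))
          * (Real.exp (σ * U k ω) - Real.exp (σ ^ 2 * k / 2))))

/-- The dynamic correlation `ρ_t` of the Geometric Brownian motion pair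
`(e^{σW}, e^{σU})` when `(W,U)` has dynamic correlation `r`. -/
noncomputable def gbmCorr (σ : ℝ) (r : ℕ → ℝ) (t : ℕ) : ℝ :=
  (Real.exp (r t * σ ^ 2 * t) - 1) / (Real.exp (σ ^ 2 * t) - 1)


section Aux
set_option linter.unusedSectionVars false
open Real
variable {Ω : Type*} [MeasureSpace Ω] [IsProbabilityMeasure (ℙ : Measure Ω)]


lemma gauss_pdf_mul (s : ℝ) {v : NNReal} (hv : v ≠ 0) (x : ℝ) :
    Real.exp (s * x) * gaussianPDFReal 0 v x
      = Real.exp (s ^ 2 * v / 2) * gaussianPDFReal (s * v) v x := by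
  have hv' : (0:ℝ) < v := by exact_mod_cast pos_iff_ne_zero.mpr hv
  simp only [gaussianPDFReal]
  rw [show Real.exp (s*x) * ((√(2 * π * v))⁻¹ * rexp (- (x - 0)^2 / (2 * v)))
      = (√(2 * π * v))⁻¹ * (rexp (s*x) * rexp (- (x - 0)^2 / (2 * v))) by ring,
    show rexp (s ^ 2 * v / 2) * ((√(2 * π * v))⁻¹ * rexp (- (x - s*v)^2 / (2 * v)))
      = (√(2 * π * v))⁻¹ * (rexp (s ^ 2 * v / 2) * rexp (- (x - s*v)^2 / (2 * v))) by ring,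
    ← Real.exp_add, ← Real.exp_add]
  congr 1
  field_simp
  congr 1
  ring

lemma integral_exp_gauss (s : ℝ) (v : NNReal) :
    ∫ x, Real.exp (s * x) ∂(gaussianReal 0 v) = Real.exp (s ^ 2 * v / 2) := by
  by_cases hv : v = 0
  · simp [hv]
  · rw [gaussianReal_of_var_ne_zero 0 hv]
    have hmeas : Measurable fun x => (gaussianPDFReal 0 v x).toNNReal :=
      (measurable_gaussianPDFReal 0 v).real_toNNReal
    have h1 : gaussianPDF 0 v = fun x => ((gaussianPDFReal 0 v x).toNNReal : ENNReal) := rfl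
    rw [h1, integral_withDensity_eq_integral_smul hmeas]
    have : ∀ x, (gaussianPDFReal 0 v x).toNNReal • Real.exp (s * x)
        = Real.exp (s ^ 2 * v / 2) * gaussianPDFReal (s * v) v x := by
      intro x
      rw [NNReal.smul_def, Real.coe_toNNReal _ (gaussianPDFReal_nonneg 0 v x), smul_eq_mul,
        mul_comm, gauss_pdf_mul s hv]
    simp_rw [this]
    rw [MeasureTheory.integral_const_mul, integral_gaussianPDFReal_eq_one (s*v) hv, mul_one]

lemma integrable_exp_gauss (s : ℝ) (v : NNReal) :
    Integrable (fun x => Real.exp (s * x)) (gaussianReal 0 v) := by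
  by_cases hv : v = 0
  · simp only [hv, gaussianReal_zero_var]
    have h : (fun x : ℝ => Real.exp (s * x)) =ᵐ[Measure.dirac (0:ℝ)] fun _ => Real.exp (s * 0) :=
      ae_eq_dirac (fun x : ℝ => Real.exp (s * x))
    exact Integrable.congr (integrable_const _) h.symm
  · rw [gaussianReal_of_var_ne_zero 0 hv]
    have hmeas : Measurable fun x => (gaussianPDFReal 0 v x).toNNReal :=
      (measurable_gaussianPDFReal 0 v).real_toNNReal
    have h1 : gaussianPDF 0 v = fun x => ((gaussianPDFReal 0 v x).toNNReal : ENNReal) := rfl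
    rw [h1, integrable_withDensity_iff_integrable_smul hmeas]
    have key : (fun x => (gaussianPDFReal 0 v x).toNNReal • Real.exp (s*x))
        = fun x => Real.exp (s^2*v/2) * gaussianPDFReal (s*v) v x := funext fun x => by
      rw [NNReal.smul_def, Real.coe_toNNReal _ (gaussianPDFReal_nonneg 0 v x), smul_eq_mul,
        mul_comm, gauss_pdf_mul s hv]
    rw [key]
    exact (integrable_gaussianPDFReal _ _).const_mul _


lemma IsDiscreteBM.map_eq {W : ℕ → Ω → ℝ} (hW : IsDiscreteBM W) (t : ℕ) :
    Measure.map (W t) (ℙ : Measure Ω) = gaussianReal 0 t := by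
  have h0 := hW.incr 0 t (Nat.zero_le t)
  have hae : (fun ω => W t ω - W 0 ω) =ᵐ[(ℙ : Measure Ω)] W t := by
    filter_upwards [hW.init] with ω h; simp [h]
  rw [← Measure.map_congr hae, h0]
  simp

lemma IsDiscreteBM.integral_exp {W : ℕ → Ω → ℝ} (hW : IsDiscreteBM W) (s : ℝ) (t : ℕ) :
    ∫ ω, Real.exp (s * W t ω) ∂(ℙ : Measure Ω) = Real.exp (s ^ 2 * t / 2) := by
  have hc : Continuous fun x : ℝ => Real.exp (s * x) := by fun_prop
  have h : ∫ ω, Real.exp (s * W t ω) ∂(ℙ : Measure Ω)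
      = ∫ x, Real.exp (s * x) ∂(Measure.map (W t) (ℙ : Measure Ω)) :=
    (integral_map (hW.meas t).aemeasurable hc.aestronglyMeasurable).symm
  rw [h, hW.map_eq, integral_exp_gauss]
  norm_num

lemma IsDiscreteBM.integrable_exp {W : ℕ → Ω → ℝ} (hW : IsDiscreteBM W) (s : ℝ) (t : ℕ) :
    Integrable (fun ω => Real.exp (s * W t ω)) (ℙ : Measure Ω) := by
  have h := integrable_exp_gauss s (t : NNReal)
  rw [← hW.map_eq t] at h
  have hc : Continuous fun x : ℝ => Real.exp (s * x) := by fun_prop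
  exact (integrable_map_measure hc.aestronglyMeasurable (hW.meas t).aemeasurable).mp h

lemma ProcIndep.eval {A B : ℕ → Ω → ℝ} (h : ProcIndep A B) (s t : ℕ) :
    IndepFun (A s) (B t) (ℙ : Measure Ω) :=
  h.comp (measurable_pi_apply s) (measurable_pi_apply t)

lemma cross_exp {r : ℕ → ℝ} {W U : ℕ → Ω → ℝ} (h : IsCorrBMPair r W U) (σ : ℝ) (t : ℕ) :
    Integrable (fun ω => Real.exp (σ * W t ω) * Real.exp (σ * U t ω)) (ℙ : Measure Ω) ∧
    ∫ ω, Real.exp (σ * W t ω) * Real.exp (σ * U t ω) ∂(ℙ : Measure Ω)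
      = Real.exp (σ ^ 2 * t * (1 + r t)) := by
  obtain ⟨X1, Y1, hX1, hY1, hind, hind', hrep, hrep'⟩ := h.rep
  have h1r : 0 ≤ 1 - r t ^ 2 := by
    have := abs_le.mp (h.bound t); nlinarith
  set s : ℝ := Real.sqrt (1 - r t ^ 2) with hs
  have hs2 : s ^ 2 = 1 - r t ^ 2 := Real.sq_sqrt h1r
  -- a.e. rewrite
  have hae : (fun ω => Real.exp (σ * W t ω) * Real.exp (σ * U t ω))
      =ᵐ[(ℙ : Measure Ω)]
      fun ω => Real.exp ((σ * (1 + r t)) * U t ω) * Real.exp ((σ * s) * X1 t ω) := by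
    filter_upwards [hrep t] with ω hω
    rw [← Real.exp_add, ← Real.exp_add, hω, ← hs]
    ring_nf
  have hcU : Continuous fun x : ℝ => Real.exp ((σ * (1 + r t)) * x) := by fun_prop
  have hcX : Continuous fun x : ℝ => Real.exp ((σ * s) * x) := by fun_prop
  have hIndep := IndepFun.comp ((hind.eval t t).symm) hcU.measurable hcX.measurable
  have hiU := h.bmY.integrable_exp (σ * (1 + r t)) t
  have hiX := hX1.integrable_exp (σ * s) t
  have hmul : Integrable (fun ω => Real.exp ((σ * (1 + r t)) * U t ω)
      * Real.exp ((σ * s) * X1 t ω)) (ℙ : Measure Ω) := hIndep.integrable_mul hiU hiX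
  refine ⟨hmul.congr hae.symm, ?_⟩
  have hmulI := hIndep.integral_mul_eq_mul_integral hiU.aestronglyMeasurable hiX.aestronglyMeasurable
  simp only [Function.comp_def, Pi.mul_def] at hmulI
  rw [integral_congr_ae hae, hmulI,
    h.bmY.integral_exp, hX1.integral_exp, ← Real.exp_add]
  congr 1
  have : (σ * s) ^ 2 = σ ^ 2 * (1 - r t ^ 2) := by rw [mul_pow, hs2]
  rw [this]
  ring

lemma centered_eq {W U : ℕ → Ω → ℝ} (σ : ℝ) (t : ℕ) (P : ℝ)
    (hW : IsDiscreteBM W) (hU : IsDiscreteBM U)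
    (hint : Integrable (fun ω => Real.exp (σ * W t ω) * Real.exp (σ * U t ω)) (ℙ : Measure Ω))
    (hI : ∫ ω, Real.exp (σ * W t ω) * Real.exp (σ * U t ω) ∂(ℙ : Measure Ω) = P) :
    Integrable (fun ω => (Real.exp (σ * W t ω) - Real.exp (σ ^ 2 * t / 2))
        * (Real.exp (σ * U t ω) - Real.exp (σ ^ 2 * t / 2))) (ℙ : Measure Ω) ∧
    ∫ ω, (Real.exp (σ * W t ω) - Real.exp (σ ^ 2 * t / 2))
        * (Real.exp (σ * U t ω) - Real.exp (σ ^ 2 * t / 2)) ∂(ℙ : Measure Ω)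
      = P - Real.exp (σ ^ 2 * t) := by
  set E : ℝ := Real.exp (σ ^ 2 * t / 2) with hE
  have hfun : (fun ω => (Real.exp (σ * W t ω) - E) * (Real.exp (σ * U t ω) - E))
      = fun ω => Real.exp (σ * W t ω) * Real.exp (σ * U t ω)
        - E * Real.exp (σ * W t ω) - E * Real.exp (σ * U t ω) + E * E := by
    funext ω; ring
  have hiW := hW.integrable_exp σ t
  have hiU := hU.integrable_exp σ t
  have hint2 : Integrable (fun ω => Real.exp (σ * W t ω) * Real.exp (σ * U t ω)
      - E * Real.exp (σ * W t ω) - E * Real.exp (σ * U t ω) + E * E) (ℙ : Measure Ω) :=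
    (((hint.sub (hiW.const_mul E)).sub (hiU.const_mul E)).add (integrable_const _))
  have hA : Integrable (fun ω => Real.exp (σ * W t ω) * Real.exp (σ * U t ω)
      - E * Real.exp (σ * W t ω)) (ℙ : Measure Ω) := hint.sub (hiW.const_mul E)
  have hB : Integrable (fun ω => Real.exp (σ * W t ω) * Real.exp (σ * U t ω)
      - E * Real.exp (σ * W t ω) - E * Real.exp (σ * U t ω)) (ℙ : Measure Ω) :=
    hA.sub (hiU.const_mul E)
  constructor
  · rw [hfun]; exact hint2
  · rw [hfun, integral_add hB (integrable_const _), integral_sub hA (hiU.const_mul E),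
      integral_sub hint (hiW.const_mul E), hI, integral_const_mul, integral_const_mul,
      hW.integral_exp, hU.integral_exp, integral_const]
    simp only [measure_univ, ENNReal.toReal_one, probReal_univ, smul_eq_mul, one_mul]
    rw [hE, ← Real.exp_add]
    ring_nf

lemma integral_gamma {W U : ℕ → Ω → ℝ} (σ a b c : ℝ) (m : ℕ → ℝ)
    (hInt : ∀ k : ℕ, Integrable (fun ω => (Real.exp (σ * W k ω) - Real.exp (σ ^ 2 * k / 2))
        * (Real.exp (σ * U k ω) - Real.exp (σ ^ 2 * k / 2))) (ℙ : Measure Ω))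
    (hI : ∀ k : ℕ, ∫ ω, (Real.exp (σ * W k ω) - Real.exp (σ ^ 2 * k / 2))
        * (Real.exp (σ * U k ω) - Real.exp (σ ^ 2 * k / 2)) ∂(ℙ : Measure Ω) = m k)
    (T t : ℕ) :
    ∫ ω, gbmGammaEq3 σ a b c W U T t ω ∂(ℙ : Measure Ω)
      = Real.exp (-(c * σ ^ 2 * T)) *
        ((∑ k ∈ Finset.Icc 1 T, Real.exp (a * σ ^ 2 * k)) * m t
          - ∑ k ∈ Finset.Icc 1 T, Real.exp (-(b * σ ^ 2 * k)) * m k) := by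
  unfold gbmGammaEq3
  rw [integral_const_mul]
  congr 1
  have hki : ∀ k ∈ Finset.Icc 1 T, Integrable (fun ω =>
      Real.exp (a * σ ^ 2 * k) * ((Real.exp (σ * W t ω) - Real.exp (σ ^ 2 * t / 2))
        * (Real.exp (σ * U t ω) - Real.exp (σ ^ 2 * t / 2)))
      - Real.exp (-(b * σ ^ 2 * k)) * ((Real.exp (σ * W k ω) - Real.exp (σ ^ 2 * k / 2))
        * (Real.exp (σ * U k ω) - Real.exp (σ ^ 2 * k / 2)))) (ℙ : Measure Ω) :=
    fun k _ => ((hInt t).const_mul _).sub ((hInt k).const_mul _)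
  have h1 : ∀ k : ℕ, Integrable (fun ω =>
      Real.exp (a * σ ^ 2 * k) * ((Real.exp (σ * W t ω) - Real.exp (σ ^ 2 * t / 2))
        * (Real.exp (σ * U t ω) - Real.exp (σ ^ 2 * t / 2)))) (ℙ : Measure Ω) :=
    fun k => (hInt t).const_mul _
  have h2 : ∀ k : ℕ, Integrable (fun ω =>
      Real.exp (-(b * σ ^ 2 * k)) * ((Real.exp (σ * W k ω) - Real.exp (σ ^ 2 * k / 2))
        * (Real.exp (σ * U k ω) - Real.exp (σ ^ 2 * k / 2)))) (ℙ : Measure Ω) :=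
    fun k => (hInt k).const_mul _
  rw [integral_finset_sum _ hki]
  rw [Finset.sum_congr rfl (fun k _ => by
      rw [integral_sub (h1 k) (h2 k),
        integral_const_mul, integral_const_mul, hI t, hI k])]
  rw [Finset.sum_sub_distrib, ← Finset.sum_mul]

end Aux

set_option maxHeartbeats 1000000 in
theorem statement10 {Ω : Type*} [MeasureSpace Ω] [IsProbabilityMeasure (ℙ : Measure Ω)]
    (σ : ℝ) (hσ : 0 < σ) (r : ℕ → ℝ) (W U : ℕ → Ω → ℝ) (h : IsCorrBMPair r W U)
    (a b c : ℝ) (ha : 0 < a) (hb : 2 < b) (t : ℕ) (ht : 1 ≤ t) :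
    Tendsto (fun T =>
        (∫ ω, gbmGammaEq3 σ a b c W U T t ω ∂(ℙ : Measure Ω)) /
          Real.sqrt ((∫ ω, gbmGammaEq3 σ a b c W W T t ω ∂(ℙ : Measure Ω)) *
            (∫ ω, gbmGammaEq3 σ a b c U U T t ω ∂(ℙ : Measure Ω))))
      atTop (nhds (gbmCorr σ r t)) := by
  have hσ2 : (0:ℝ) < σ ^ 2 := by positivity
  have htp : (0:ℝ) < t := by exact_mod_cast ht
  set mC : ℕ → ℝ := fun k => Real.exp (σ ^ 2 * k * (1 + r k)) - Real.exp (σ ^ 2 * k) with hmC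
  set mW : ℕ → ℝ := fun k => Real.exp ((2*σ) ^ 2 * k / 2) - Real.exp (σ ^ 2 * k) with hmW
  -- centered moments for the pair (W,U)
  have hC : ∀ k : ℕ, Integrable (fun ω => (Real.exp (σ * W k ω) - Real.exp (σ ^ 2 * k / 2))
        * (Real.exp (σ * U k ω) - Real.exp (σ ^ 2 * k / 2))) (ℙ : Measure Ω) ∧
      ∫ ω, (Real.exp (σ * W k ω) - Real.exp (σ ^ 2 * k / 2))
        * (Real.exp (σ * U k ω) - Real.exp (σ ^ 2 * k / 2)) ∂(ℙ : Measure Ω) = mC k :=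
    fun k => centered_eq σ k _ h.bmX h.bmY (cross_exp h σ k).1 (cross_exp h σ k).2
  -- centered moments for (W,W) and (U,U)
  have hsq : ∀ (V : ℕ → Ω → ℝ), IsDiscreteBM V → ∀ k : ℕ,
      Integrable (fun ω => (Real.exp (σ * V k ω) - Real.exp (σ ^ 2 * k / 2))
        * (Real.exp (σ * V k ω) - Real.exp (σ ^ 2 * k / 2))) (ℙ : Measure Ω) ∧
      ∫ ω, (Real.exp (σ * V k ω) - Real.exp (σ ^ 2 * k / 2))
        * (Real.exp (σ * V k ω) - Real.exp (σ ^ 2 * k / 2)) ∂(ℙ : Measure Ω) = mW k := by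
    intro V hV k
    have key : (fun ω => Real.exp (σ * V k ω) * Real.exp (σ * V k ω))
        = fun ω => Real.exp ((2*σ) * V k ω) := funext fun ω => by
      rw [← Real.exp_add]; congr 1; ring
    have hint : Integrable (fun ω => Real.exp (σ * V k ω) * Real.exp (σ * V k ω))
        (ℙ : Measure Ω) := by rw [key]; exact hV.integrable_exp (2*σ) k
    have hI : ∫ ω, Real.exp (σ * V k ω) * Real.exp (σ * V k ω) ∂(ℙ : Measure Ω)
        = Real.exp ((2*σ) ^ 2 * k / 2) := by rw [key]; exact hV.integral_exp (2*σ) k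
    exact centered_eq σ k _ hV hV hint hI
  set A : ℕ → ℝ := fun T => ∑ k ∈ Finset.Icc 1 T, Real.exp (a * σ ^ 2 * k) with hA
  set B0 : ℕ → ℝ := fun T => ∑ k ∈ Finset.Icc 1 T, Real.exp (-(b * σ ^ 2 * k)) * mC k with hB0d
  set B1 : ℕ → ℝ := fun T => ∑ k ∈ Finset.Icc 1 T, Real.exp (-(b * σ ^ 2 * k)) * mW k with hB1d
  have hγC : ∀ T : ℕ, ∫ ω, gbmGammaEq3 σ a b c W U T t ω ∂(ℙ : Measure Ω)
      = Real.exp (-(c * σ ^ 2 * T)) * (A T * mC t - B0 T) :=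
    fun T => integral_gamma σ a b c mC (fun k => (hC k).1) (fun k => (hC k).2) T t
  have hγW : ∀ T : ℕ, ∫ ω, gbmGammaEq3 σ a b c W W T t ω ∂(ℙ : Measure Ω)
      = Real.exp (-(c * σ ^ 2 * T)) * (A T * mW t - B1 T) :=
    fun T => integral_gamma σ a b c mW (fun k => (hsq W h.bmX k).1) (fun k => (hsq W h.bmX k).2) T t
  have hγU : ∀ T : ℕ, ∫ ω, gbmGammaEq3 σ a b c U U T t ω ∂(ℙ : Measure Ω)
      = Real.exp (-(c * σ ^ 2 * T)) * (A T * mW t - B1 T) :=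
    fun T => integral_gamma σ a b c mW (fun k => (hsq U h.bmY k).1) (fun k => (hsq U h.bmY k).2) T t
  -- bounds
  have hAT : ∀ T : ℕ, (T : ℝ) ≤ A T := by
    intro T
    have h1 : ∀ k ∈ Finset.Icc 1 T, (1:ℝ) ≤ Real.exp (a * σ ^ 2 * k) :=
      fun k _ => Real.one_le_exp (by positivity)
    calc (T:ℝ) = ∑ _k ∈ Finset.Icc 1 T, (1:ℝ) := by
          rw [Finset.sum_const, Nat.card_Icc]; simp
      _ ≤ A T := Finset.sum_le_sum h1
  set q : ℝ := Real.exp (-((b - 2) * σ ^ 2)) with hqdef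
  have hq0 : 0 ≤ q := (Real.exp_pos _).le
  have hq1 : q < 1 := by
    rw [hqdef, Real.exp_lt_one_iff]; nlinarith
  have hterm : ∀ (m : ℕ → ℝ), (∀ k : ℕ, |m k| ≤ 2 * Real.exp (2 * (σ ^ 2 * k))) →
      ∀ T : ℕ, |∑ k ∈ Finset.Icc 1 T, Real.exp (-(b * σ ^ 2 * k)) * m k| ≤ 2 * (1 - q)⁻¹ := by
    intro m hm T
    calc |∑ k ∈ Finset.Icc 1 T, Real.exp (-(b * σ ^ 2 * k)) * m k|
        ≤ ∑ k ∈ Finset.Icc 1 T, |Real.exp (-(b * σ ^ 2 * k)) * m k| :=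
          Finset.abs_sum_le_sum_abs _ _
      _ ≤ ∑ k ∈ Finset.Icc 1 T, 2 * q ^ k := by
          refine Finset.sum_le_sum fun k _ => ?_
          rw [abs_mul, Real.abs_exp]
          refine (mul_le_mul_of_nonneg_left (hm k) (Real.exp_pos _).le).trans (le_of_eq ?_)
          rw [show Real.exp (-(b * σ ^ 2 * k)) * (2 * Real.exp (2 * (σ ^ 2 * k)))
              = 2 * Real.exp (-(b * σ ^ 2 * k) + 2 * (σ ^ 2 * k)) by
            rw [mul_left_comm, ← Real.exp_add], hqdef, ← Real.exp_nat_mul]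
          congr 1; ring
      _ ≤ 2 * (1 - q)⁻¹ := by
          rw [← Finset.mul_sum]
          exact mul_le_mul_of_nonneg_left
            (sum_le_hasSum _ (fun k _ => pow_nonneg hq0 k)
              (hasSum_geometric_of_lt_one hq0 hq1)) (by norm_num)
  have hmCb : ∀ k : ℕ, |mC k| ≤ 2 * Real.exp (2 * (σ ^ 2 * k)) := by
    intro k
    have hk : (0:ℝ) ≤ k := Nat.cast_nonneg k
    have hp : (0:ℝ) ≤ σ ^ 2 * k := by positivity
    have hr2 := (abs_le.mp (h.bound k)).2
    have h1 : Real.exp (σ ^ 2 * k * (1 + r k)) ≤ Real.exp (2 * (σ ^ 2 * k)) :=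
      Real.exp_le_exp.mpr (by nlinarith [mul_nonneg hp (by linarith : (0:ℝ) ≤ 1 - r k)])
    have h2 : Real.exp (σ ^ 2 * (k:ℝ)) ≤ Real.exp (2 * (σ ^ 2 * k)) :=
      Real.exp_le_exp.mpr (by linarith)
    calc |mC k| ≤ |Real.exp (σ ^ 2 * k * (1 + r k))| + |Real.exp (σ ^ 2 * (k:ℝ))| := abs_sub _ _
      _ ≤ 2 * Real.exp (2 * (σ ^ 2 * k)) := by
          rw [Real.abs_exp, Real.abs_exp]; linarith
  have hmWb : ∀ k : ℕ, |mW k| ≤ 2 * Real.exp (2 * (σ ^ 2 * k)) := by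
    intro k
    have h1 : Real.exp ((2*σ) ^ 2 * k / 2) ≤ Real.exp (2 * (σ ^ 2 * k)) :=
      Real.exp_le_exp.mpr (by nlinarith)
    have hp : (0:ℝ) ≤ σ ^ 2 * k := by positivity
    have h2 : Real.exp (σ ^ 2 * (k:ℝ)) ≤ Real.exp (2 * (σ ^ 2 * k)) :=
      Real.exp_le_exp.mpr (by linarith)
    calc |mW k| ≤ |Real.exp ((2*σ) ^ 2 * k / 2)| + |Real.exp (σ ^ 2 * (k:ℝ))| := abs_sub _ _
      _ ≤ 2 * Real.exp (2 * (σ ^ 2 * k)) := by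
          rw [Real.abs_exp, Real.abs_exp]; linarith
  have hB0b := hterm mC hmCb
  have hB1b := hterm mW hmWb
  -- B/A → 0
  have hBA : ∀ (B : ℕ → ℝ), (∀ T : ℕ, |B T| ≤ 2 * (1 - q)⁻¹) →
      Tendsto (fun T : ℕ => B T / A T) atTop (nhds 0) := by
    intro B hBb
    apply squeeze_zero_norm' ?_ (tendsto_const_div_atTop_nhds_zero_nat (2 * (1 - q)⁻¹))
    filter_upwards [eventually_ge_atTop 1] with T hT
    have hT' : (0:ℝ) < T := by exact_mod_cast hT
    have hApos : 0 < A T := lt_of_lt_of_le hT' (hAT T)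
    rw [Real.norm_eq_abs, abs_div, abs_of_pos hApos]
    have hq2 : (0:ℝ) ≤ 2 * (1 - q)⁻¹ := by
      have : 0 < 1 - q := by linarith
      positivity
    exact div_le_div₀ hq2 (hBb T) hT' (hAT T)
  have hBA0 := hBA B0 hB0b
  have hBA1 := hBA B1 hB1b
  -- positivity of the limit denominator
  have hv : 0 < mW t := by
    rw [hmW]
    have : σ ^ 2 * (t:ℝ) < (2*σ) ^ 2 * t / 2 := by nlinarith
    simpa using sub_pos.mpr (Real.exp_lt_exp.mpr this)
  -- limit value
  have hval : mC t / mW t = gbmCorr σ r t := by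
    have e1 : mC t = Real.exp (σ ^ 2 * t) * (Real.exp (r t * σ ^ 2 * t) - 1) := by
      show Real.exp (σ ^ 2 * (t:ℝ) * (1 + r t)) - Real.exp (σ ^ 2 * (t:ℝ)) = _
      rw [mul_sub, ← Real.exp_add, mul_one]
      congr 2
      ring
    have e2 : mW t = Real.exp (σ ^ 2 * t) * (Real.exp (σ ^ 2 * t) - 1) := by
      show Real.exp ((2 * σ) ^ 2 * (t:ℝ) / 2) - Real.exp (σ ^ 2 * (t:ℝ)) = _
      rw [mul_sub, ← Real.exp_add, mul_one]
      congr 2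
      ring
    rw [e1, e2, mul_div_mul_left _ _ (Real.exp_ne_zero _)]
    rfl
  -- the limit
  have hlim : Tendsto (fun T : ℕ => (mC t - B0 T / A T) / |mW t - B1 T / A T|)
      atTop (nhds (mC t / mW t)) := by
    have h1 : Tendsto (fun T : ℕ => mC t - B0 T / A T) atTop (nhds (mC t - 0)) :=
      tendsto_const_nhds.sub hBA0
    have h2 : Tendsto (fun T : ℕ => |mW t - B1 T / A T|) atTop (nhds |mW t - 0|) :=
      (tendsto_const_nhds.sub hBA1).abs
    have h3 := h1.div h2 (by rw [sub_zero]; exact (abs_pos.mpr hv.ne').ne')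
    have h4 : (mC t - 0) / |mW t - 0| = mC t / mW t := by
      rw [sub_zero, sub_zero, abs_of_pos hv]
    rwa [h4] at h3
  rw [← hval]
  refine hlim.congr' ?_
  filter_upwards [eventually_ge_atTop 1] with T hT
  have hT' : (0:ℝ) < T := by exact_mod_cast hT
  have hApos : 0 < A T := lt_of_lt_of_le hT' (hAT T)
  rw [hγC T, hγW T, hγU T, Real.sqrt_mul_self_eq_abs, abs_mul, Real.abs_exp,
    mul_div_mul_left _ _ (Real.exp_ne_zero _),
    show A T * mC t - B0 T = A T * (mC t - B0 T / A T) by field_simp,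
    show A T * mW t - B1 T = A T * (mW t - B1 T / A T) by field_simp,
    abs_mul, abs_of_pos hApos, mul_div_mul_left _ _ hApos.ne']
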